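/- Under the hypotheses of the unbounded-control-set result (forward generators satisfying (v1)–(v6), backward generators satisfying (u1), (u2′), (u3)–(u7), u_T the identity, and ess sup_{z ∈ L⁰_t(ℝ^d)} u_t(x, v_t(x,z), z) − x ≤ K for all t and x ∈ L⁰_t for a constant K > 0), the value functions satisfy the two-sided bound 0 ≤ y_t(x) − x ≤ (T−t)·K for all t = 0,…,T and all x ∈ L⁰_t. -/

import Mathlib

open MeasureTheory Filter Topology Set

namespace CondPaper

variable {Ω : Type*}

/-- A countable partition of `Ω` (up to `μ`-null sets) into `G`-measurable sets. -/
def IsCondPartition {_ : MeasurableSpace Ω} (μ : Measure Ω) (G : MeasurableSpace Ω)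
    (A : ℕ → Set Ω) : Prop :=
  (∀ k, MeasurableSet[G] (A k)) ∧
    (∀ i j, i ≠ j → μ (A i ∩ A j) = 0) ∧ μ (⋃ k, A k)ᶜ = 0

/-- A `G`-conditional metric on a nonempty set `X` (Definition 2.1 of the paper). -/
structure CondMetric {_ : MeasurableSpace Ω} (μ : Measure Ω) (G : MeasurableSpace Ω)
    (X : Type*) : Type _ where
  d : X → X → Ω → ℝ
  measurable_d : ∀ x y, Measurable[G] (d x y)
  nonneg : ∀ x y, ∀ᵐ ω ∂μ, 0 ≤ d x y ω
  eq_iff : ∀ x y, (d x y =ᵐ[μ] fun _ => (0 : ℝ)) ↔ x = y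
  symm : ∀ x y, d x y =ᵐ[μ] d y x
  triangle : ∀ x y z, ∀ᵐ ω ∂μ, d x z ω ≤ d x y ω + d y z ω
  concat_spec : ∀ (A : ℕ → Set Ω), IsCondPartition μ G A → ∀ x : ℕ → X,
    ∃! x₀ : X, ∀ k, ∀ᵐ ω ∂μ, ω ∈ A k → d x₀ (x k) ω = 0

namespace CondMetric

variable {m : MeasurableSpace Ω} {μ : Measure Ω} {G : MeasurableSpace Ω} {X Z : Type*}

/-- The concatenation `Σₖ 1_{A k} (x k)` along a partition. -/
noncomputable def concat (D : CondMetric μ G X) (A : ℕ → Set Ω)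
    (hA : IsCondPartition μ G A) (x : ℕ → X) : X :=
  (D.concat_spec A hA x).choose

/-- Almost sure convergence `x n → x₀` in a conditional metric space. -/
def TendstoAE (D : CondMetric μ G X) (x : ℕ → X) (x₀ : X) : Prop :=
  ∀ᵐ ω ∂μ, Tendsto (fun n => D.d x₀ (x n) ω) atTop (nhds (0 : ℝ))

lemma isCondPartition_level {n : Ω → ℕ} (hn : Measurable[G] n) (μ : @Measure Ω m) :
    IsCondPartition μ G fun j => {ω | n ω = j} := by
  refine ⟨fun j => hn (MeasurableSet.singleton j), ?_, ?_⟩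
  · intro i j hij
    have h : {ω | n ω = i} ∩ {ω | n ω = j} = (∅ : Set Ω) := by
      ext ω
      simp only [Set.mem_inter_iff, Set.mem_setOf_eq, Set.mem_empty_iff_false, iff_false]
      rintro ⟨h1, h2⟩
      exact hij (h1 ▸ h2 ▸ rfl)
    simp [h]
  · have h : (⋃ j, {ω | n ω = j}) = (Set.univ : Set Ω) := by
      ext ω; simp
    simp [h]

/-- Given a `G`-measurable index `n : Ω → ℕ`, the element `x_{n}` of the
"measurable subsequence", i.e. the concatenation of `(x j)` along `({n = j})_j`. -/
noncomputable def subseq (D : CondMetric μ G X) (x : ℕ → X) (n : Ω → ℕ)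
    (hn : Measurable[G] n) : X :=
  D.concat (fun j => {ω | n ω = j}) (isCondPartition_level hn μ) x

end CondMetric

variable {m : MeasurableSpace Ω} {μ : Measure Ω} {G : MeasurableSpace Ω} {X Z : Type*}

/-- A strictly increasing sequence `n₁ < n₂ < ⋯` of `G`-measurable `ℕ`-valued random
variables (indexing a measurable subsequence). -/
structure MIdx {_ : MeasurableSpace Ω} (μ : Measure Ω) (G : MeasurableSpace Ω) where
  n : ℕ → Ω → ℕ
  meas : ∀ k, Measurable[G] (n k)
  lt : ∀ k, ∀ᵐ ω ∂μ, n k ω < n (k + 1) ω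

/-- A `G`-stable subset: nonempty and closed under countable concatenations. -/
def StableSet (D : CondMetric μ G X) (H : Set X) : Prop :=
  H.Nonempty ∧ ∀ (A : ℕ → Set Ω) (hA : IsCondPartition μ G A) (x : ℕ → X),
    (∀ k, x k ∈ H) → D.concat A hA x ∈ H

/-- A sequentially closed subset of a conditional metric space. -/
def SeqClosedSet (D : CondMetric μ G X) (H : Set X) : Prop :=
  ∀ (x : ℕ → X) (x₀ : X), (∀ k, x k ∈ H) → D.TendstoAE x x₀ → x₀ ∈ H

/-- Conditional sequential compactness: every sequence has a measurable
subsequence converging a.s. to an element of `K`. -/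
def CondSeqCompact (D : CondMetric μ G X) (K : Set X) : Prop :=
  ∀ z : ℕ → X, (∀ k, z k ∈ K) →
    ∃ (N : MIdx μ G) (z₀ : X), z₀ ∈ K ∧
      D.TendstoAE (fun k => D.subseq z (N.n k) (N.meas k)) z₀

/-- Condition (c1): nonempty control sets. -/
def ControlC1 (Θ : X → Set Z) : Prop := ∀ x, (Θ x).Nonempty

/-- Condition (c2): `𝓕ₜ`-stability of the state-dependent control set. -/
def ControlC2 (DX : CondMetric μ G X) (DZ : CondMetric μ G Z) (Θ : X → Set Z) : Prop :=
  ∀ (A : ℕ → Set Ω) (hA : IsCondPartition μ G A) (x : ℕ → X),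
    Θ (DX.concat A hA x) =
      {w | ∃ z : ℕ → Z, (∀ k, z k ∈ Θ (x k)) ∧ w = DZ.concat A hA z}

/-- Condition (c3): conditional sequential compactness of each control set. -/
def ControlC3 (DZ : CondMetric μ G Z) (Θ : X → Set Z) : Prop :=
  ∀ x, CondSeqCompact DZ (Θ x)

/-- Condition (c4): conditional outer semi-continuity of the control set. -/
def ControlC4 (DX : CondMetric μ G X) (DZ : CondMetric μ G Z) (Θ : X → Set Z) : Prop :=
  ∀ (x : ℕ → X) (x₀ : X), DX.TendstoAE x x₀ → ∀ z : ℕ → Z, (∀ n, z n ∈ Θ (x n)) →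
    ∃ (N : MIdx μ G) (z' : ℕ → Z), (∀ k, z' k ∈ Θ x₀) ∧
      ∀ᵐ ω ∂μ, Tendsto
        (fun k => DZ.d (DZ.subseq z (N.n k) (N.meas k)) (z' k) ω) atTop (nhds (0 : ℝ))

/-- Membership in `L̲⁰(G)`: a `G`-measurable random variable with values in `ℝ ∪ {-∞}`. -/
def InLbar {_ : MeasurableSpace Ω} (μ : Measure Ω) (G : MeasurableSpace Ω)
    (y : Ω → EReal) : Prop :=
  Measurable[G] y ∧ ∀ᵐ ω ∂μ, y ω < ⊤

end CondPaper

namespace CondPaper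

variable {Ω : Type*}

/-- The recursively defined objective of a plan in the concrete setting
`Xₜ = L⁰ₜ`, `Zₜ = L⁰ₜ(ℝ^d)` with `u_T = id`: `rewardR T u xs zs k` is the value at time
`T - k`. -/
def rewardR (d T : ℕ)
    (u : ℕ → (Ω → ℝ) → (Ω → EReal) → (Ω → EuclideanSpace ℝ (Fin d)) → Ω → EReal)
    (xs : ℕ → Ω → ℝ) (zs : ℕ → Ω → EuclideanSpace ℝ (Fin d)) : ℕ → Ω → EReal
  | 0 => fun ω => ((xs T ω : ℝ) : EReal)
  | k + 1 => u (T - (k + 1)) (xs (T - (k + 1)))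
      (rewardR d T u xs zs k) (zs (T - (k + 1)))

/-- A plan in `C_t(x)` (unconstrained controls): an adapted state/control process
started at `x` at time `t` and following the forward dynamics `v`. -/
def IsPlanR {_ : MeasurableSpace Ω} (μ : Measure Ω) (d : ℕ)
    (F : ℕ → MeasurableSpace Ω)
    (v : ℕ → (Ω → ℝ) → (Ω → EuclideanSpace ℝ (Fin d)) → Ω → ℝ)
    (T t : ℕ) (x : Ω → ℝ) (xs : ℕ → Ω → ℝ)
    (zs : ℕ → Ω → EuclideanSpace ℝ (Fin d)) : Prop :=
  (∀ s, t ≤ s → s ≤ T → Measurable[F s] (xs s)) ∧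
  (∀ s, t ≤ s → s < T → Measurable[F s] (zs s)) ∧
  xs t =ᵐ[μ] x ∧
  ∀ s, t ≤ s → s < T → xs (s + 1) =ᵐ[μ] v s (xs s) (zs s)

end CondPaper

namespace CondPaper

/-- **Two-sided bound on the value functions (step of the proof of Proposition 4.1).**
Under the hypotheses of the unbounded-control-set result, the value functions satisfy
`0 ≤ y_t(x) - x ≤ (T - t)·K` a.s. for all `t = 0, …, T` and all `x ∈ L⁰ₜ`. -/
theorem value_function_bounds {Ω : Type*} {m : MeasurableSpace Ω} {μ : Measure Ω}
    [IsProbabilityMeasure μ]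
    (d T : ℕ) (F : ℕ → MeasurableSpace Ω)
    (hFmono : Monotone F) (hFm : ∀ t, F t ≤ m) (hFT : F T = m)
    (v : ℕ → (Ω → ℝ) → (Ω → EuclideanSpace ℝ (Fin d)) → Ω → ℝ)
    -- vₜ maps L⁰ₜ × L⁰ₜ(ℝ^d) into L⁰_{t+1}, and respects a.e. equality
    (hvmeas : ∀ t < T, ∀ (x : Ω → ℝ) (z : Ω → EuclideanSpace ℝ (Fin d)),
      Measurable[F t] x → Measurable[F t] z → Measurable[F (t + 1)] (v t x z))
    (hvae : ∀ t < T, ∀ (x x' : Ω → ℝ) (z z' : Ω → EuclideanSpace ℝ (Fin d)),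
      x =ᵐ[μ] x' → z =ᵐ[μ] z' → v t x z =ᵐ[μ] v t x' z')
    -- (v1): 𝓕ₜ-stability
    (hv1 : ∀ t < T, ∀ (A : ℕ → Set Ω), IsCondPartition μ (F t) A →
      ∀ (xk : ℕ → Ω → ℝ) (zk : ℕ → Ω → EuclideanSpace ℝ (Fin d))
        (x₀ : Ω → ℝ) (z₀ : Ω → EuclideanSpace ℝ (Fin d)),
      (∀ k, ∀ᵐ ω ∂μ, ω ∈ A k → x₀ ω = xk k ω) →
      (∀ k, ∀ᵐ ω ∂μ, ω ∈ A k → z₀ ω = zk k ω) →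
      ∀ k, ∀ᵐ ω ∂μ, ω ∈ A k → v t x₀ z₀ ω = v t (xk k) (zk k) ω)
    -- (v2): sequential continuity
    (hv2 : ∀ t < T, ∀ (xk : ℕ → Ω → ℝ) (x₀ : Ω → ℝ)
      (zk : ℕ → Ω → EuclideanSpace ℝ (Fin d)) (z₀ : Ω → EuclideanSpace ℝ (Fin d)),
      (∀ᵐ ω ∂μ, Filter.Tendsto (fun k => xk k ω) Filter.atTop (nhds (x₀ ω))) →
      (∀ᵐ ω ∂μ, Filter.Tendsto (fun k => zk k ω) Filter.atTop (nhds (z₀ ω))) →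
      ∀ᵐ ω ∂μ, Filter.Tendsto (fun k => v t (xk k) (zk k) ω) Filter.atTop
        (nhds (v t x₀ z₀ ω)))
    -- (v3): monotonicity in the first component
    (hv3 : ∀ t < T, ∀ (x x' : Ω → ℝ) (z : Ω → EuclideanSpace ℝ (Fin d)),
      x ≤ᵐ[μ] x' → v t x z ≤ᵐ[μ] v t x' z)
    -- (v4): concavity in the control
    (hv4 : ∀ t < T, ∀ (x : Ω → ℝ) (z z' : Ω → EuclideanSpace ℝ (Fin d))
      (lam : Ω → ℝ), Measurable[F t] lam → (∀ᵐ ω ∂μ, 0 ≤ lam ω ∧ lam ω ≤ 1) →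
      ∀ᵐ ω ∂μ, lam ω * v t x z ω + (1 - lam ω) * v t x z' ω ≤
        v t x (fun ω' => lam ω' • z ω' + (1 - lam ω') • z' ω') ω)
    -- (v5): ℙ(vₜ(x,z) < x | 𝓕ₜ) > 0 on {z ≠ 0}
    (hv5 : ∀ t < T, ∀ (x : Ω → ℝ) (z : Ω → EuclideanSpace ℝ (Fin d)),
      Measurable[F t] x → Measurable[F t] z →
      ∀ B : Set Ω, MeasurableSet[F t] B → μ (B \ {ω | z ω ≠ 0}) = 0 → 0 < μ B →
        0 < μ (B ∩ {ω | v t x z ω < x ω}))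
    -- (v6): vₜ(x,0) = x
    (hv6 : ∀ t < T, ∀ x : Ω → ℝ, v t x (fun _ => 0) =ᵐ[μ] x)
    (u : ℕ → (Ω → ℝ) → (Ω → EReal) → (Ω → EuclideanSpace ℝ (Fin d)) → Ω → EReal)
    -- uₜ maps L⁰ₜ × L̲⁰_{t+1} × L⁰ₜ(ℝ^d) into L̲⁰ₜ, and respects a.e. equality
    (huL : ∀ t < T, ∀ (x : Ω → ℝ) (y : Ω → EReal) (z : Ω → EuclideanSpace ℝ (Fin d)),
      Measurable[F t] x → InLbar μ (F (t + 1)) y → Measurable[F t] z →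
      InLbar μ (F t) (u t x y z))
    (huae : ∀ t < T, ∀ (x x' : Ω → ℝ) (y y' : Ω → EReal)
      (z z' : Ω → EuclideanSpace ℝ (Fin d)),
      x =ᵐ[μ] x' → y =ᵐ[μ] y' → z =ᵐ[μ] z' → u t x y z =ᵐ[μ] u t x' y' z')
    -- (u1): 𝓕ₜ-stability
    (hu1 : ∀ t < T, ∀ (A : ℕ → Set Ω), IsCondPartition μ (F t) A →
      ∀ (xk : ℕ → Ω → ℝ) (yk : ℕ → Ω → EReal)
        (zk : ℕ → Ω → EuclideanSpace ℝ (Fin d))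
        (x₀ : Ω → ℝ) (y₀ : Ω → EReal) (z₀ : Ω → EuclideanSpace ℝ (Fin d)),
      (∀ k, ∀ᵐ ω ∂μ, ω ∈ A k → x₀ ω = xk k ω) →
      (∀ k, ∀ᵐ ω ∂μ, ω ∈ A k → y₀ ω = yk k ω) →
      (∀ k, ∀ᵐ ω ∂μ, ω ∈ A k → z₀ ω = zk k ω) →
      ∀ k, ∀ᵐ ω ∂μ, ω ∈ A k → u t x₀ y₀ z₀ ω = u t (xk k) (yk k) (zk k) ω)
    -- (u2'): monotonicity in the first and second components
    (hu2' : ∀ t < T, ∀ (x x' : Ω → ℝ) (y y' : Ω → EReal)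
      (z : Ω → EuclideanSpace ℝ (Fin d)),
      x ≤ᵐ[μ] x' → y ≤ᵐ[μ] y' → u t x y z ≤ᵐ[μ] u t x' y' z)
    -- (u3): sequential upper semi-continuity
    (hu3 : ∀ t < T, ∀ (xk : ℕ → Ω → ℝ) (x₀ : Ω → ℝ) (yk : ℕ → Ω → EReal)
      (y₀ : Ω → EReal) (zk : ℕ → Ω → EuclideanSpace ℝ (Fin d))
      (z₀ : Ω → EuclideanSpace ℝ (Fin d)),
      (∀ᵐ ω ∂μ, Filter.Tendsto (fun k => xk k ω) Filter.atTop (nhds (x₀ ω))) →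
      (∀ᵐ ω ∂μ, Filter.Tendsto (fun k => yk k ω) Filter.atTop (nhds (y₀ ω))) →
      (∀ᵐ ω ∂μ, Filter.Tendsto (fun k => zk k ω) Filter.atTop (nhds (z₀ ω))) →
      ∀ᵐ ω ∂μ, Filter.limsup (fun k => u t (xk k) (yk k) (zk k) ω) Filter.atTop ≤
        u t x₀ y₀ z₀ ω)
    -- (u4): quasi-concavity
    (hu4 : ∀ t < T, ∀ (x : Ω → ℝ) (y y' : Ω → EReal)
      (z z' : Ω → EuclideanSpace ℝ (Fin d)) (lam : Ω → ℝ),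
      Measurable[F t] lam → (∀ᵐ ω ∂μ, 0 ≤ lam ω ∧ lam ω ≤ 1) →
      ∀ᵐ ω ∂μ, min (u t x y z ω) (u t x y' z' ω) ≤
        u t x (fun ω' => (lam ω' : EReal) * y ω' + ((1 - lam ω' : ℝ) : EReal) * y' ω')
          (fun ω' => lam ω' • z ω' + (1 - lam ω') • z' ω') ω)
    -- (u5): 𝓕ₜ-translation invariance in the second component
    (hu5 : ∀ t < T, ∀ (x : Ω → ℝ) (y : Ω → EReal)
      (z : Ω → EuclideanSpace ℝ (Fin d)) (c : Ω → ℝ), Measurable[F t] c →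
      u t x (fun ω => y ω + (c ω : EReal)) z =ᵐ[μ]
        fun ω => u t x y z ω + (c ω : EReal))
    -- (u6): sensitivity to large losses on {ℙ(y < 0 | 𝓕ₜ) > 0}
    (hu6 : ∀ t < T, ∀ (x : Ω → ℝ) (y : Ω → EReal)
      (z : Ω → EuclideanSpace ℝ (Fin d)),
      ∀ᵐ ω ∂μ, 0 < (μ[Set.indicator {ω' | y ω' < 0} (fun _ => (1 : ℝ)) | F t]) ω →
        Filter.Tendsto
          (fun mm : ℕ => u t x (fun ω' => (mm : EReal) * y ω')
            (fun ω' => (mm : ℝ) • z ω') ω) Filter.atTop (nhds (⊥ : EReal)))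
    -- (u7): uₜ(x,0,0) = 0
    (hu7 : ∀ t < T, ∀ x : Ω → ℝ,
      u t x (fun _ => (0 : EReal)) (fun _ => 0) =ᵐ[μ] fun _ => (0 : EReal))
    -- the uniform bound: ess sup_z uₜ(x, vₜ(x,z), z) - x ≤ K
    (K : ℝ) (hKpos : 0 < K)
    (hK : ∀ t < T, ∀ (x : Ω → ℝ) (z : Ω → EuclideanSpace ℝ (Fin d)),
      Measurable[F t] x → Measurable[F t] z →
      ∀ᵐ ω ∂μ, u t x (fun ω' => ((v t x z ω' : ℝ) : EReal)) z ω ≤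
        ((x ω + K : ℝ) : EReal))
    -- the value functions, given by an essential supremum over all plans
    (Y : ℕ → (Ω → ℝ) → Ω → EReal)
    (hY : ∀ t ≤ T, ∀ x : Ω → ℝ, Measurable[F t] x →
      Measurable[F t] (Y t x) ∧
      (∀ (xs : ℕ → Ω → ℝ) (zs : ℕ → Ω → EuclideanSpace ℝ (Fin d)),
        IsPlanR μ d F v T t x xs zs →
        ∀ᵐ ω ∂μ, rewardR d T u xs zs (T - t) ω ≤ Y t x ω) ∧
      (∀ b : Ω → EReal, Measurable[F t] b →
        (∀ (xs : ℕ → Ω → ℝ) (zs : ℕ → Ω → EuclideanSpace ℝ (Fin d)),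
          IsPlanR μ d F v T t x xs zs →
          ∀ᵐ ω ∂μ, rewardR d T u xs zs (T - t) ω ≤ b ω) →
        ∀ᵐ ω ∂μ, Y t x ω ≤ b ω)) :
    ∀ t ≤ T, ∀ x : Ω → ℝ, Measurable[F t] x →
      ∀ᵐ ω ∂μ, ((x ω : ℝ) : EReal) ≤ Y t x ω ∧
        Y t x ω ≤ ((x ω + (T - t : ℕ) * K : ℝ) : EReal) := by
  intro t ht x hx
  -- the "do nothing" plan: constant state x, zero controls
  set xs0 : ℕ → Ω → ℝ := fun _ => x with hxs0
  set zs0 : ℕ → Ω → EuclideanSpace ℝ (Fin d) := fun _ _ => 0 with hzs0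
  have hplan0 : IsPlanR μ d F v T t x xs0 zs0 := by
    refine ⟨fun s hs _ => hx.mono (hFmono hs) le_rfl,
      fun s _ _ => measurable_const, Filter.EventuallyEq.rfl,
      fun s _ hsT => (hv6 s hsT x).symm⟩
  -- lower bound: the reward of the zero plan is a.e. equal to x
  have hlow : ∀ k, k ≤ T - t →
      rewardR d T u xs0 zs0 k =ᵐ[μ] fun ω => ((x ω : ℝ) : EReal) := by
    intro k
    induction k with
    | zero => intro _; exact Filter.EventuallyEq.rfl
    | succ k ih =>
      intro hk
      have ihk := ih (le_trans (Nat.le_succ k) hk)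
      have hsT : T - (k + 1) < T := by omega
      have hts : t ≤ T - (k + 1) := by omega
      set s := T - (k + 1) with hs
      show u s x (rewardR d T u xs0 zs0 k) (fun _ => 0) =ᵐ[μ]
        fun ω => ((x ω : ℝ) : EReal)
      have h1 : u s x (rewardR d T u xs0 zs0 k) (fun _ => 0) =ᵐ[μ]
          u s x (fun ω => ((x ω : ℝ) : EReal)) (fun _ => 0) :=
        huae s hsT x x _ _ _ _ Filter.EventuallyEq.rfl ihk Filter.EventuallyEq.rfl
      have h5 := hu5 s hsT x (fun _ => (0 : EReal)) (fun _ => 0) x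
        (hx.mono (hFmono hts) le_rfl)
      have h7 := hu7 s hsT x
      simp only [zero_add] at h5
      refine h1.trans ?_
      filter_upwards [h5, h7] with ω e5 e7
      rw [e5, e7, zero_add]
  -- upper bound along an arbitrary plan
  have hup : ∀ (xs : ℕ → Ω → ℝ) (zs : ℕ → Ω → EuclideanSpace ℝ (Fin d)),
      IsPlanR μ d F v T t x xs zs → ∀ k, k ≤ T - t →
      rewardR d T u xs zs k ≤ᵐ[μ]
        fun ω => ((xs (T - k) ω + (k : ℕ) * K : ℝ) : EReal) := by
    intro xs zs hplan k
    induction k with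
    | zero =>
      intro _
      refine Filter.Eventually.of_forall fun ω => ?_
      simp [rewardR]
    | succ k ih =>
      intro hk
      have ihk := ih (le_trans (Nat.le_succ k) hk)
      have hsT : T - (k + 1) < T := by omega
      have hts : t ≤ T - (k + 1) := by omega
      have hTk : T - k = (T - (k + 1)) + 1 := by omega
      set s := T - (k + 1) with hs
      rw [hTk] at ihk
      have hxm : Measurable[F s] (xs s) := hplan.1 s hts (le_of_lt hsT)
      have hzm : Measurable[F s] (zs s) := hplan.2.1 s hts hsT
      have hdyn : xs (s + 1) =ᵐ[μ] v s (xs s) (zs s) := hplan.2.2.2 s hts hsT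
      show u s (xs s) (rewardR d T u xs zs k) (zs s) ≤ᵐ[μ]
        fun ω => ((xs s ω + ((k + 1 : ℕ) : ℝ) * K : ℝ) : EReal)
      have step1 : u s (xs s) (rewardR d T u xs zs k) (zs s) ≤ᵐ[μ]
          u s (xs s) (fun ω => ((xs (s + 1) ω + (k : ℕ) * K : ℝ) : EReal)) (zs s) :=
        hu2' s hsT (xs s) (xs s) _ _ (zs s) (Filter.EventuallyLE.refl _ _) ihk
      have step2 : u s (xs s) (fun ω => ((xs (s + 1) ω + (k : ℕ) * K : ℝ) : EReal)) (zs s)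
          =ᵐ[μ] u s (xs s)
            (fun ω => ((v s (xs s) (zs s) ω + (k : ℕ) * K : ℝ) : EReal)) (zs s) := by
        refine huae s hsT _ _ _ _ _ _ Filter.EventuallyEq.rfl ?_ Filter.EventuallyEq.rfl
        filter_upwards [hdyn] with ω e
        rw [e]
      have h5 := hu5 s hsT (xs s)
        (fun ω => ((v s (xs s) (zs s) ω : ℝ) : EReal)) (zs s)
        (fun _ => ((k : ℕ) : ℝ) * K) measurable_const
      simp only [← EReal.coe_add] at h5
      have step4 := hK s hsT (xs s) (zs s) hxm hzm
      filter_upwards [step1, step2, h5, step4] with ω e1 e2 e5 e4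
      calc u s (xs s) (rewardR d T u xs zs k) (zs s) ω
          ≤ u s (xs s) (fun ω => ((xs (s + 1) ω + (k : ℕ) * K : ℝ) : EReal)) (zs s) ω := e1
        _ = u s (xs s) (fun ω => ((v s (xs s) (zs s) ω + (k : ℕ) * K : ℝ) : EReal)) (zs s) ω := e2
        _ = u s (xs s) (fun ω' => ((v s (xs s) (zs s) ω' : ℝ) : EReal)) (zs s) ω
              + (((k : ℕ) : ℝ) * K : ℝ) := e5
        _ ≤ ((xs s ω + K : ℝ) : EReal) + (((k : ℕ) : ℝ) * K : ℝ) := add_le_add e4 le_rfl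
        _ = ((xs s ω + ((k + 1 : ℕ) : ℝ) * K : ℝ) : EReal) := by
            rw [← EReal.coe_add]
            congr 1
            push_cast
            ring
  obtain ⟨hYm, hYge, hYle⟩ := hY t ht x hx
  have hlowfinal : ∀ᵐ ω ∂μ, ((x ω : ℝ) : EReal) ≤ Y t x ω := by
    filter_upwards [hYge xs0 zs0 hplan0, hlow (T - t) le_rfl] with ω h1 h2
    rw [← h2]
    exact h1
  have hb : Measurable[F t] (fun ω => ((x ω + ((T - t : ℕ) : ℝ) * K : ℝ) : EReal)) :=
    measurable_coe_real_ereal.comp (hx.add measurable_const)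
  have hupfinal := hYle _ hb (by
    intro xs zs hplan
    have h := hup xs zs hplan (T - t) le_rfl
    have hTt : T - (T - t) = t := by omega
    rw [hTt] at h
    filter_upwards [h, hplan.2.2.1] with ω h1 h2
    rw [h2] at h1
    exact h1)
  filter_upwards [hlowfinal, hupfinal] with ω h1 h2
  exact ⟨h1, h2⟩

end CondPaper
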